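/- For every ε > 0 there exists C = C(ε) > 0 such that if p = C/n, then with high probability the random graph G ~ G(n,p) contains a path of length at least (1−ε)n. -/

import Mathlib

open Filter
open scoped Classical

/-- The probability, in the Erdős–Rényi binomial random graph `G(n,p)`,
of the event `P` (each of the `n.choose 2` pairs is an edge independently
with probability `p`). -/
noncomputable def erProb (n : ℕ) (p : ℝ) (P : SimpleGraph (Fin n) → Prop) : ℝ :=
  ∑ G : SimpleGraph (Fin n),
    if P G then
      p ^ Nat.card G.edgeSet * (1 - p) ^ (n.choose 2 - Nat.card G.edgeSet)
    else 0

open Finset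

variable {n : ℕ} {p : ℝ}

/-- the finset of potential edges -/
noncomputable def pairs (n : ℕ) : Finset (Sym2 (Fin n)) :=
  Finset.univ.filter (fun e => ¬ e.IsDiag)

lemma pairs_card : (pairs n).card = n.choose 2 := by
  rw [pairs, ← Fintype.card_subtype, Sym2.card_subtype_not_diag, Fintype.card_fin]

lemma edgeFinset_mem_powerset (G : SimpleGraph (Fin n)) :
    G.edgeFinset ∈ (pairs n).powerset := by
  simp only [Finset.mem_powerset, pairs]
  intro e he
  simp only [Finset.mem_filter, Finset.mem_univ, true_and]
  exact SimpleGraph.not_isDiag_of_mem_edgeSet G (by simpa using he)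

lemma natcard_eq (G : SimpleGraph (Fin n)) : Nat.card G.edgeSet = G.edgeFinset.card := by
  rw [Nat.card_eq_fintype_card, SimpleGraph.edgeFinset_card]

lemma sum_graph_eq (f : Finset (Sym2 (Fin n)) → ℝ) :
    ∑ G : SimpleGraph (Fin n), f G.edgeFinset = ∑ s ∈ (pairs n).powerset, f s := by
  refine Finset.sum_nbij' (fun G => G.edgeFinset)
    (fun s => SimpleGraph.fromEdgeSet ↑s) (fun G _ => edgeFinset_mem_powerset G)
    (fun s _ => Finset.mem_univ _) ?_ ?_ (fun _ _ => rfl)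
  · intro G _
    simp only [SimpleGraph.coe_edgeFinset, SimpleGraph.fromEdgeSet_edgeSet]
  · intro s hs
    ext e
    simp only [SimpleGraph.mem_edgeFinset, SimpleGraph.edgeSet_fromEdgeSet,
      Set.mem_diff, Finset.mem_coe, Set.mem_setOf_eq]
    constructor
    · exact fun h => h.1
    · intro he
      refine ⟨he, ?_⟩
      have := Finset.mem_powerset.mp hs he
      simpa [pairs] using this

lemma sum_powerset_pow {α : Type*} (T : Finset α) (a b : ℝ) :
    ∑ s ∈ T.powerset, a ^ s.card * b ^ (T.card - s.card) = (a + b) ^ T.card := by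
  classical
  have h := Finset.prod_add (fun _ : α => a) (fun _ : α => b) T
  simp only [Finset.prod_const] at h
  rw [h]
  apply Finset.sum_congr rfl
  intro s hs
  rw [Finset.card_sdiff_of_subset (Finset.mem_powerset.mp hs)]

lemma fromEdgeSet_edgeFinset (G : SimpleGraph (Fin n)) :
    SimpleGraph.fromEdgeSet ↑G.edgeFinset = G := by
  simp only [SimpleGraph.coe_edgeFinset, SimpleGraph.fromEdgeSet_edgeSet]

lemma erProb_eq_sum (P : SimpleGraph (Fin n) → Prop) :
    erProb n p P = ∑ s ∈ (pairs n).powerset,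
      if P (SimpleGraph.fromEdgeSet ↑s) then p ^ s.card * (1 - p) ^ (n.choose 2 - s.card) else 0 := by
  rw [erProb]
  refine Finset.sum_nbij' (fun G => G.edgeFinset) (fun s => SimpleGraph.fromEdgeSet ↑s)
    (fun G _ => edgeFinset_mem_powerset G) (fun s _ => Finset.mem_univ _)
    (fun G _ => fromEdgeSet_edgeFinset G) ?_ ?_
  · intro s hs
    ext e
    simp only [SimpleGraph.mem_edgeFinset, SimpleGraph.edgeSet_fromEdgeSet,
      Set.mem_diff, Finset.mem_coe, Set.mem_setOf_eq]
    constructor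
    · exact fun h => h.1
    · intro he
      refine ⟨he, ?_⟩
      have := Finset.mem_powerset.mp hs he
      simpa [pairs] using this
  · intro G _
    rw [natcard_eq, fromEdgeSet_edgeFinset]

lemma erProb_forbidden (F : Finset (Sym2 (Fin n))) (hF : F ⊆ pairs n) :
    erProb n p (fun G => ∀ e ∈ F, e ∉ G.edgeSet) = (1 - p) ^ F.card := by
  have key : erProb n p (fun G => ∀ e ∈ F, e ∉ G.edgeSet)
      = ∑ s ∈ ((pairs n) \ F).powerset, p ^ s.card * (1 - p) ^ (n.choose 2 - s.card) := by
    rw [erProb_eq_sum]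
    have step : ∀ s ∈ (pairs n).powerset,
        (@ite ℝ (∀ e ∈ F, e ∉ (SimpleGraph.fromEdgeSet (↑s : Set (Sym2 (Fin n)))).edgeSet)
          (Classical.propDecidable _)
          (p ^ s.card * (1 - p) ^ (n.choose 2 - s.card)) 0)
        = (if (∀ e ∈ F, e ∉ s) then p ^ s.card * (1 - p) ^ (n.choose 2 - s.card) else 0) := by
      intro s hs
      have hiff : (∀ e ∈ F, e ∉ (SimpleGraph.fromEdgeSet (↑s : Set (Sym2 (Fin n)))).edgeSet)
          ↔ (∀ e ∈ F, e ∉ s) := by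
        apply forall₂_congr
        intro e he
        have hnd : ¬ e.IsDiag := by
          have := hF he
          simpa [pairs] using this
        simp [SimpleGraph.edgeSet_fromEdgeSet, hnd]
      simp only [hiff]
    refine Eq.trans (Finset.sum_congr rfl step) ?_
    rw [Finset.sum_ite, Finset.sum_const, smul_zero, add_zero]
    apply Finset.sum_congr _ (fun _ _ => rfl)
    ext s
    simp only [Finset.mem_filter, Finset.mem_powerset, Finset.subset_sdiff]
    constructor
    · rintro ⟨h1, h2⟩
      exact ⟨h1, Finset.disjoint_left.mpr (fun e he hf => h2 e hf he)⟩
    · rintro ⟨h1, h2⟩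
      exact ⟨h1, fun e hf he => Finset.disjoint_left.mp h2 he hf⟩
  rw [key]
  have hT : ((pairs n) \ F).card = n.choose 2 - F.card := by
    rw [Finset.card_sdiff_of_subset hF, pairs_card]
  have hFle : F.card ≤ n.choose 2 := by
    rw [← pairs_card]; exact Finset.card_le_card hF
  have : ∀ s ∈ ((pairs n) \ F).powerset,
      p ^ s.card * (1 - p) ^ (n.choose 2 - s.card)
      = (p ^ s.card * (1 - p) ^ (((pairs n) \ F).card - s.card)) * (1 - p) ^ F.card := by
    intro s hs
    have hsle : s.card ≤ ((pairs n) \ F).card := Finset.card_le_card (Finset.mem_powerset.mp hs)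
    rw [mul_assoc, ← pow_add]
    congr 2
    omega
  rw [Finset.sum_congr rfl this, ← Finset.sum_mul, sum_powerset_pow]
  norm_num

lemma erProb_true : erProb n p (fun _ => True) = 1 := by
  have h := erProb_forbidden (n := n) (p := p) ∅ (Finset.empty_subset _)
  simp only [Finset.notMem_empty, false_implies, implies_true, Finset.card_empty, pow_zero] at h
  rw [← h]

lemma erProb_add_compl (P : SimpleGraph (Fin n) → Prop) :
    erProb n p P + erProb n p (fun G => ¬ P G) = 1 := by
  rw [← erProb_true (n := n) (p := p)]
  unfold erProb
  rw [← Finset.sum_add_distrib]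
  apply Finset.sum_congr rfl
  intro G _
  by_cases h : P G <;> simp [h]

lemma erProb_mono_le_sum {ι : Type*} (hp0 : 0 ≤ p) (hp1 : p ≤ 1) (I : Finset ι)
    (P : SimpleGraph (Fin n) → Prop) (Q : ι → SimpleGraph (Fin n) → Prop)
    (h : ∀ G, P G → ∃ i ∈ I, Q i G) :
    erProb n p P ≤ ∑ i ∈ I, erProb n p (Q i) := by
  simp only [erProb]
  rw [Finset.sum_comm]
  apply Finset.sum_le_sum
  intro G _
  set w := p ^ Nat.card G.edgeSet * (1 - p) ^ (n.choose 2 - Nat.card G.edgeSet) with hw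
  have hw0 : 0 ≤ w := mul_nonneg (pow_nonneg hp0 _) (pow_nonneg (by linarith) _)
  by_cases hP : P G
  · obtain ⟨i, hi, hQ⟩ := h G hP
    calc (if P G then w else 0) = w := if_pos hP
      _ = (if Q i G then w else 0) := (if_pos hQ).symm
      _ ≤ ∑ i ∈ I, (if Q i G then w else 0) := by
          apply Finset.single_le_sum (f := fun i => if Q i G then w else 0) _ hi
          intro j _
          by_cases hj : Q j G <;> simp [hj, hw0]
  · rw [if_neg hP]
    apply Finset.sum_nonneg
    intro j _
    by_cases hj : Q j G <;> simp [hj, hw0]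

lemma erProb_congr {P Q : SimpleGraph (Fin n) → Prop} (h : ∀ G, P G ↔ Q G) :
    erProb n p P = erProb n p Q :=
  congrArg (erProb n p) (funext fun G => propext (h G))

lemma erProb_noedge {k : ℕ} (A B : Finset (Fin n)) (hd : Disjoint A B)
    (hA : A.card = k) (hB : B.card = k) :
    erProb n p (fun G => ∀ a ∈ A, ∀ b ∈ B, ¬ G.Adj a b) = (1 - p) ^ (k * k) := by
  set F : Finset (Sym2 (Fin n)) := (A ×ˢ B).image (fun ab => s(ab.1, ab.2)) with hF
  have hne : ∀ a ∈ A, ∀ b ∈ B, a ≠ b := by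
    intro a ha b hb hab
    exact Finset.disjoint_left.mp hd ha (hab ▸ hb)
  have hFsub : F ⊆ pairs n := by
    intro e he
    simp only [hF, Finset.mem_image, Finset.mem_product] at he
    obtain ⟨⟨a, b⟩, ⟨ha, hb⟩, rfl⟩ := he
    simp only [pairs, Finset.mem_filter, Finset.mem_univ, true_and]
    simpa using hne a ha b hb
  have hFcard : F.card = k * k := by
    rw [hF, Finset.card_image_of_injOn, Finset.card_product, hA, hB]
    rintro ⟨a, b⟩ hab ⟨c, d⟩ hcd h
    simp only [Finset.mem_coe, Finset.mem_product] at hab hcd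
    rw [Sym2.mk_eq_mk_iff] at h
    rcases h with h | h
    · exact h
    · exfalso
      have h1 : a = d := congrArg Prod.fst h
      exact hne a hab.1 d hcd.2 h1
  rw [← hFcard, ← erProb_forbidden F hFsub]
  apply erProb_congr
  intro G
  constructor
  · intro h e he
    simp only [hF, Finset.mem_image, Finset.mem_product] at he
    obtain ⟨⟨a, b⟩, ⟨ha, hb⟩, rfl⟩ := he
    rw [SimpleGraph.mem_edgeSet]
    exact h a ha b hb
  · intro h a ha b hb hadj
    exact h s(a, b) (Finset.mem_image.mpr ⟨(a, b), Finset.mem_product.mpr ⟨ha, hb⟩, rfl⟩)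
      (G.mem_edgeSet.mpr hadj)

lemma erProb_bad_le (k : ℕ) (hp0 : 0 ≤ p) (hp1 : p ≤ 1) :
    erProb n p (fun G => ∃ A B : Finset (Fin n), Disjoint A B ∧ A.card = k ∧ B.card = k ∧
      ∀ a ∈ A, ∀ b ∈ B, ¬ G.Adj a b) ≤ (4 : ℝ) ^ n * (1 - p) ^ (k * k) := by
  set I := Finset.univ.filter (fun AB : Finset (Fin n) × Finset (Fin n) =>
    Disjoint AB.1 AB.2 ∧ AB.1.card = k ∧ AB.2.card = k) with hI
  have h1 := erProb_mono_le_sum (n := n) hp0 hp1 I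
    (fun G => ∃ A B : Finset (Fin n), Disjoint A B ∧ A.card = k ∧ B.card = k ∧
      ∀ a ∈ A, ∀ b ∈ B, ¬ G.Adj a b)
    (fun AB G => ∀ a ∈ AB.1, ∀ b ∈ AB.2, ¬ G.Adj a b)
    (by
      rintro G ⟨A, B, hd, hA, hB, hno⟩
      exact ⟨(A, B), by simp [hI, hd, hA, hB], hno⟩)
  refine le_trans h1 ?_
  have h2 : ∀ i ∈ I, erProb n p (fun G => ∀ a ∈ i.1, ∀ b ∈ i.2, ¬ G.Adj a b)
      = (1 - p) ^ (k * k) := by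
    rintro ⟨A, B⟩ hi
    simp only [hI, Finset.mem_filter] at hi
    exact erProb_noedge A B hi.2.1 hi.2.2.1 hi.2.2.2
  rw [Finset.sum_congr rfl h2, Finset.sum_const, nsmul_eq_mul]
  apply mul_le_mul_of_nonneg_right _ (pow_nonneg (by linarith) _)
  calc (I.card : ℝ) ≤ (Finset.univ.card : ℝ) := by
        exact_mod_cast Finset.card_le_card (Finset.filter_subset _ _)
    _ ≤ (4 : ℝ) ^ n := by
        rw [Finset.card_univ, Fintype.card_prod, Fintype.card_finset, Fintype.card_fin]
        push_cast
        calc ((2:ℝ) ^ n * 2 ^ n) = 4 ^ n := by rw [← mul_pow]; norm_num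
          _ ≤ 4 ^ n := le_refl _

lemma erProb_nonneg (hp0 : 0 ≤ p) (hp1 : p ≤ 1) (P : SimpleGraph (Fin n) → Prop) :
    0 ≤ erProb n p P := by
  apply Finset.sum_nonneg
  intro G _
  have : 0 ≤ p ^ Nat.card G.edgeSet * (1 - p) ^ (n.choose 2 - Nat.card G.edgeSet) :=
    mul_nonneg (pow_nonneg hp0 _) (pow_nonneg (by linarith) _)
  by_cases h : P G
  · rwa [if_pos h]
  · rw [if_neg h]

lemma erProb_le_one (hp0 : 0 ≤ p) (hp1 : p ≤ 1) (P : SimpleGraph (Fin n) → Prop) :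
    erProb n p P ≤ 1 := by
  have h := erProb_add_compl (n := n) (p := p) P
  have := erProb_nonneg (n := n) hp0 hp1 (fun G => ¬ P G)
  linarith

section det
set_option linter.unusedSectionVars false
variable {V : Type*} [Fintype V] [DecidableEq V]

lemma exists_walk_of_chain (G : SimpleGraph V) :
    ∀ (l : List V) (a : V), List.Chain G.Adj a l → (a :: l).Nodup →
    ∃ (b : V) (w : G.Walk a b), w.IsPath ∧ w.support = a :: l := by
  intro l
  induction l with
  | nil => exact fun a _ _ => ⟨a, SimpleGraph.Walk.nil, by simp, by simp⟩
  | cons x l ih =>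
    intro a hc hn
    obtain ⟨hax, hc'⟩ := List.chain_cons.mp hc
    obtain ⟨b, w, hp, hs⟩ := ih x hc' (List.Nodup.of_cons hn)
    refine ⟨b, SimpleGraph.Walk.cons hax w, ?_, by simp [hs]⟩
    rw [SimpleGraph.Walk.cons_isPath_iff]
    refine ⟨hp, ?_⟩
    rw [hs]
    exact (List.nodup_cons.mp hn).1

lemma dfs_reach (G : SimpleGraph V) :
    ∀ (N : ℕ) (U W : Finset V) (S : List V),
      2 * U.card + S.length ≤ N →
      (∀ v : V, v ∈ U ∨ v ∈ S ∨ v ∈ W) →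
      (∀ v ∈ U, v ∉ S) → (∀ v ∈ U, v ∉ W) → (∀ v ∈ S, v ∉ W) →
      S.Nodup → S.Chain' G.Adj →
      (∀ w ∈ W, ∀ u ∈ U, ¬ G.Adj w u) →
      W.card ≤ U.card →
      ∃ (U' W' : Finset V) (S' : List V),
        U'.card = W'.card ∧
        (∀ v : V, v ∈ U' ∨ v ∈ S' ∨ v ∈ W') ∧
        (∀ v ∈ U', v ∉ S') ∧ (∀ v ∈ S', v ∉ W') ∧ (∀ v ∈ U', v ∉ W') ∧
        S'.Nodup ∧ S'.Chain' G.Adj ∧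
        (∀ w ∈ W', ∀ u ∈ U', ¬ G.Adj w u) := by
  intro N
  induction N with
  | zero =>
    intro U W S hm hcov hUS hUW hSW hnd hch hne hcard
    exact ⟨U, W, S, by omega, hcov, hUS, hSW, hUW, hnd, hch, hne⟩
  | succ N ih =>
    intro U W S hm hcov hUS hUW hSW hnd hch hne hcard
    by_cases heq : U.card = W.card
    · exact ⟨U, W, S, heq, hcov, hUS, hSW, hUW, hnd, hch, hne⟩
    have hlt : W.card < U.card := lt_of_le_of_ne hcard (fun h => heq h.symm)
    have hUpos : 0 < U.card := lt_of_le_of_lt (Nat.zero_le _) hlt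
    obtain ⟨u, hu⟩ := Finset.card_pos.mp hUpos
    match S, hnd, hch, hm with
    | [], _, _, hm =>
      refine ih (U.erase u) W [u] ?_ ?_ ?_ ?_ ?_ ?_ ?_ ?_ ?_
      · simp only [Finset.card_erase_of_mem hu, List.length_cons, List.length_nil]
        simp only [List.length_nil] at hm
        omega
      · intro v
        rcases hcov v with h | h | h
        · by_cases hv : v = u
          · exact Or.inr (Or.inl (by simp [hv]))
          · exact Or.inl (Finset.mem_erase.mpr ⟨hv, h⟩)
        · simp at h
        · exact Or.inr (Or.inr h)
      · intro v hv
        have := (Finset.mem_erase.mp hv).1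
        simp [this]
      · intro v hv
        exact hUW v (Finset.mem_erase.mp hv).2
      · intro v hv
        simp only [List.mem_singleton] at hv
        subst hv
        exact hUW v hu
      · simp
      · exact List.isChain_singleton _
      · intro w hw x hx
        exact hne w hw x (Finset.mem_erase.mp hx).2
      · rw [Finset.card_erase_of_mem hu]
        omega
    | v :: rest, hnd, hch, hm =>
      by_cases hnb : ∃ x ∈ U, G.Adj v x
      · obtain ⟨x, hx, hadj⟩ := hnb
        refine ih (U.erase x) W (x :: v :: rest) ?_ ?_ ?_ ?_ ?_ ?_ ?_ ?_ ?_
        · simp only [Finset.card_erase_of_mem hx, List.length_cons] at *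
          omega
        · intro y
          rcases hcov y with h | h | h
          · by_cases hy : y = x
            · exact Or.inr (Or.inl (by simp [hy]))
            · exact Or.inl (Finset.mem_erase.mpr ⟨hy, h⟩)
          · exact Or.inr (Or.inl (List.mem_cons_of_mem _ h))
          · exact Or.inr (Or.inr h)
        · intro y hy
          obtain ⟨hyx, hyU⟩ := Finset.mem_erase.mp hy
          simp only [List.mem_cons, not_or]
          refine ⟨hyx, ?_, ?_⟩
          · intro hyv; exact hUS y hyU (hyv ▸ List.mem_cons_self)
          · intro hyr; exact hUS y hyU (List.mem_cons_of_mem _ hyr)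
        · intro y hy
          exact hUW y (Finset.mem_erase.mp hy).2
        · intro y hy
          rcases List.mem_cons.mp hy with h | h
          · subst h; exact hUW y hx
          · exact hSW y h
        · rw [List.nodup_cons]
          exact ⟨fun hmem => hUS x hx hmem, hnd⟩
        · rw [List.Chain', List.isChain_cons]
          constructor
          · intro z hz
            have : z = v := by
              simp only [List.head?_cons, Option.mem_def, Option.some.injEq] at hz
              exact hz.symm
            subst this
            exact hadj.symm
          · exact hch
        · intro w hw y hy
          exact hne w hw y (Finset.mem_erase.mp hy).2
        · rw [Finset.card_erase_of_mem hx]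
          omega
      · push_neg at hnb
        refine ih U (insert v W) rest ?_ ?_ ?_ ?_ ?_ ?_ ?_ ?_ ?_
        · simp only [List.length_cons] at hm
          omega
        · intro y
          rcases hcov y with h | h | h
          · exact Or.inl h
          · rcases List.mem_cons.mp h with h | h
            · exact Or.inr (Or.inr (by simp [h]))
            · exact Or.inr (Or.inl h)
          · exact Or.inr (Or.inr (Finset.mem_insert_of_mem h))
        · intro y hy
          exact fun hmem => hUS y hy (List.mem_cons_of_mem _ hmem)
        · intro y hy
          simp only [Finset.mem_insert, not_or]
          refine ⟨?_, hUW y hy⟩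
          intro hyv
          exact hUS y hy (hyv ▸ List.mem_cons_self)
        · intro y hy
          simp only [Finset.mem_insert, not_or]
          refine ⟨?_, hSW y (List.mem_cons_of_mem _ hy)⟩
          intro hyv
          exact (List.nodup_cons.mp hnd).1 (hyv ▸ hy)
        · exact (List.nodup_cons.mp hnd).2
        · exact hch.tail
        · intro w hw y hy
          rcases Finset.mem_insert.mp hw with h | h
          · subst h; exact hnb y hy
          · exact hne w h y hy
        · rw [Finset.card_insert_of_notMem (hSW v (List.mem_cons_self))]
          omega

lemma long_path_of_expander (G : SimpleGraph V) (k : ℕ) (hkn : 2 * k ≤ Fintype.card V)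
    (hexp : ∀ A B : Finset V, Disjoint A B → A.card = k → B.card = k →
      ∃ a ∈ A, ∃ b ∈ B, G.Adj a b) :
    ∃ (u v : V) (w : G.Walk u v), w.IsPath ∧ Fintype.card V + 1 ≤ w.length + 2 * k := by
  obtain ⟨U', W', S', hcards, hcov, hUS, hSW, hUW, hnd, hch, hne⟩ :=
    dfs_reach G (2 * Fintype.card V) Finset.univ ∅ []
      (by simp [Finset.card_univ]) (by simp) (by simp) (by simp) (by simp)
      (by simp) List.isChain_nil (by simp) (by simp)
  -- m < k
  set m := W'.card with hm
  have hmk : m < k := by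
    by_contra hge
    push_neg at hge
    obtain ⟨A, hAsub, hAcard⟩ := Finset.exists_subset_card_eq (le_of_le_of_eq hge hcards.symm)
    obtain ⟨B, hBsub, hBcard⟩ := Finset.exists_subset_card_eq (hge : k ≤ W'.card)
    have hdisj : Disjoint A B := by
      rw [Finset.disjoint_left]
      intro a haA haB
      exact hUW a (hAsub haA) (hBsub haB)
    obtain ⟨a, haA, b, hbB, hab⟩ := hexp A B hdisj hAcard hBcard
    exact hne b (hBsub hbB) a (hAsub haA) hab.symm
  -- card count
  have hcount : Fintype.card V = U'.card + S'.length + W'.card := by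
    have hdisj1 : Disjoint U' S'.toFinset := by
      rw [Finset.disjoint_left]
      intro a ha ha'
      exact hUS a ha (List.mem_toFinset.mp ha')
    have hdisj2 : Disjoint (U' ∪ S'.toFinset) W' := by
      rw [Finset.disjoint_left]
      intro a ha ha'
      rcases Finset.mem_union.mp ha with h | h
      · exact hUW a h ha'
      · exact hSW a (List.mem_toFinset.mp h) ha'
    have huniv : U' ∪ S'.toFinset ∪ W' = Finset.univ := by
      apply Finset.eq_univ_of_forall
      intro v
      rcases hcov v with h | h | h
      · exact Finset.mem_union_left _ (Finset.mem_union_left _ h)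
      · exact Finset.mem_union_left _ (Finset.mem_union_right _ (List.mem_toFinset.mpr h))
      · exact Finset.mem_union_right _ h
    have := Finset.card_union_of_disjoint hdisj2
    rw [huniv, Finset.card_univ, Finset.card_union_of_disjoint hdisj1,
      List.toFinset_card_of_nodup hnd] at this
    omega
  have hlen : S'.length = Fintype.card V - 2 * m := by omega
  have hSne : 2 ≤ S'.length := by omega
  match S', hSne, hnd, hch, hlen, hcount with
  | a :: tail, hSne, hnd, hch, hlen, hcount =>
    obtain ⟨b, w, hp, hs⟩ := exists_walk_of_chain G tail a hch hnd
    refine ⟨a, b, w, hp, ?_⟩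
    have hws : w.support.length = w.length + 1 := by
      rw [SimpleGraph.Walk.length_support]
    rw [hs] at hws
    simp only [List.length_cons] at hws hlen hcount
    omega

end det

lemma erProb_mono {n : ℕ} {p : ℝ} (hp0 : 0 ≤ p) (hp1 : p ≤ 1)
    {P Q : SimpleGraph (Fin n) → Prop} (h : ∀ G, P G → Q G) :
    erProb n p P ≤ erProb n p Q := by
  apply Finset.sum_le_sum
  intro G _
  have hw : 0 ≤ p ^ Nat.card G.edgeSet * (1 - p) ^ (n.choose 2 - Nat.card G.edgeSet) :=
    mul_nonneg (pow_nonneg hp0 _) (pow_nonneg (by linarith) _)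
  by_cases hP : P G
  · rw [if_pos hP, if_pos (h G hP)]
  · rw [if_neg hP]
    by_cases hQ : Q G
    · rwa [if_pos hQ]
    · rw [if_neg hQ]

theorem stmt_13 :
    ∀ ε : ℝ, 0 < ε → ∃ C : ℝ, 0 < C ∧
      Tendsto
        (fun n : ℕ => erProb n (C / n)
          (fun G => ∃ (u v : Fin n) (p : G.Walk u v), p.IsPath ∧
            (1 - ε) * n ≤ (p.length : ℝ)))
        atTop (nhds 1) := by
  intro ε hε
  set ε' : ℝ := min ε (1/2) with hε'def
  have hε'0 : 0 < ε' := lt_min hε (by norm_num)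
  have hε'le : ε' ≤ ε := min_le_left _ _
  have hε'half : ε' ≤ 1/2 := min_le_right _ _
  set C : ℝ := 64 / ε' ^ 2 with hCdef
  have hC0 : 0 < C := by positivity
  refine ⟨C, hC0, ?_⟩
  set k : ℕ → ℕ := fun n => ⌊(ε' * n + 1) / 2⌋₊ with hkdef
  set g : ℕ → ℝ := fun n => (4 : ℝ) ^ n * (1 - C / n) ^ (k n * k n) with hgdef
  set f : ℕ → ℝ := fun n => erProb n (C / n)
    (fun G => ∃ (u v : Fin n) (p : G.Walk u v), p.IsPath ∧ (1 - ε) * n ≤ (p.length : ℝ)) with hfdef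
  have key : ∀ n : ℕ, C ≤ (n : ℝ) → 2 / ε' ≤ (n : ℝ) → (2 : ℝ) ≤ (n : ℝ) →
      (1 - g n ≤ f n ∧ f n ≤ 1 ∧ 0 ≤ g n ∧ g n ≤ (Real.exp (-2)) ^ n) := by
    intro n hCn hεn h2n
    have hn0 : (0 : ℝ) < n := by linarith
    set p : ℝ := C / n with hpdef
    have hp0 : 0 ≤ p := div_nonneg hC0.le hn0.le
    have hp1 : p ≤ 1 := (div_le_one hn0).mpr hCn
    have hε'n2 : 2 ≤ ε' * n := by
      rw [div_le_iff₀ hε'0] at hεn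
      linarith
    have hkleR : 2 * ((k n : ℝ)) ≤ ε' * n + 1 := by
      have := Nat.floor_le (by positivity : (0:ℝ) ≤ (ε' * n + 1) / 2)
      simp only [hkdef] at *
      linarith
    have hkgeR : ε' * n / 4 ≤ (k n : ℝ) := by
      have := Nat.sub_one_lt_floor ((ε' * n + 1) / 2)
      simp only [hkdef] at *
      linarith
    have h2kn : 2 * k n ≤ n := by
      have : 2 * ((k n : ℝ)) ≤ (n : ℝ) := by
        have : ε' * n ≤ n / 2 := by nlinarith
        linarith
      exact_mod_cast this
    -- contrapositive of the structural lemma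
    have himp : ∀ G : SimpleGraph (Fin n),
        (¬ ∃ (u v : Fin n) (q : G.Walk u v), q.IsPath ∧ (1 - ε) * n ≤ (q.length : ℝ)) →
        (∃ A B : Finset (Fin n), Disjoint A B ∧ A.card = k n ∧ B.card = k n ∧
          ∀ a ∈ A, ∀ b ∈ B, ¬ G.Adj a b) := by
      intro G hng
      by_contra hnb
      push_neg at hnb
      have hexp : ∀ A B : Finset (Fin n), Disjoint A B → A.card = k n → B.card = k n →
          ∃ a ∈ A, ∃ b ∈ B, G.Adj a b := by
        intro A B hd hA hB
        by_contra hno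
        push_neg at hno
        exact absurd hno (by simpa using hnb A B hd hA hB)
      obtain ⟨u, v, w, hp, hlen⟩ := long_path_of_expander G (k n)
        (by rwa [Fintype.card_fin]) hexp
      apply hng
      refine ⟨u, v, w, hp, ?_⟩
      rw [Fintype.card_fin] at hlen
      have hlenR : (n : ℝ) + 1 ≤ (w.length : ℝ) + 2 * (k n : ℝ) := by exact_mod_cast hlen
      have : (1 - ε') * n ≤ (w.length : ℝ) := by linarith
      have hεε' : (1 - ε) * n ≤ (1 - ε') * n := by nlinarith
      linarith
    have hcompl := erProb_add_compl (n := n) (p := p)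
      (fun G => ∃ (u v : Fin n) (q : G.Walk u v), q.IsPath ∧ (1 - ε) * n ≤ (q.length : ℝ))
    have hbad : erProb n p (fun G => ¬ ∃ (u v : Fin n) (q : G.Walk u v),
        q.IsPath ∧ (1 - ε) * n ≤ (q.length : ℝ)) ≤ g n := by
      refine le_trans (erProb_mono hp0 hp1 himp) ?_
      exact erProb_bad_le (k n) hp0 hp1
    have hfeq : f n = erProb n p
        (fun G => ∃ (u v : Fin n) (q : G.Walk u v), q.IsPath ∧ (1 - ε) * n ≤ (q.length : ℝ)) := rfl
    refine ⟨?_, ?_, ?_, ?_⟩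
    · rw [hfeq]; linarith
    · rw [hfeq]
      exact erProb_le_one hp0 hp1 _
    · apply mul_nonneg (pow_nonneg (by norm_num) _) (pow_nonneg (by linarith) _)
    · -- g n ≤ exp(-2)^n
      have h1 : (1 - p) ^ (k n * k n) ≤ Real.exp (-p) ^ (k n * k n) := by
        apply pow_le_pow_left₀ (by linarith)
        linarith [Real.add_one_le_exp (-p)]
      have h2 : Real.exp (-p) ^ (k n * k n) = Real.exp (-(p * ((k n * k n : ℕ) : ℝ))) := by
        rw [← Real.exp_nat_mul]
        congr 1
        push_cast
        ring
      have h3 : (4 : ℝ) * n ≤ p * ((k n * k n : ℕ) : ℝ) := by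
        have hk2 : (ε' * n / 4) * (ε' * n / 4) ≤ (k n : ℝ) * (k n : ℝ) :=
          mul_le_mul hkgeR hkgeR (by positivity) (by positivity)
        have hstep : (4 : ℝ) * n = p * ((ε' * n / 4) * (ε' * n / 4)) := by
          rw [hpdef, hCdef]
          field_simp
          ring
        calc (4 : ℝ) * n = p * ((ε' * n / 4) * (ε' * n / 4)) := hstep
          _ ≤ p * ((k n : ℝ) * (k n : ℝ)) := mul_le_mul_of_nonneg_left hk2 hp0
          _ = p * ((k n * k n : ℕ) : ℝ) := by push_cast; ring
      have h5 : (1 - p) ^ (k n * k n) ≤ Real.exp (-(4 * n)) := by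
        rw [h2] at h1
        refine le_trans h1 (Real.exp_le_exp.mpr (by linarith))
      have hexp2 : (4 : ℝ) ≤ Real.exp 2 := by
        have he2 : Real.exp 2 = Real.exp 1 * Real.exp 1 := by
          rw [← Real.exp_add]; norm_num
        nlinarith [Real.exp_one_gt_d9]
      calc g n = (4 : ℝ) ^ n * (1 - p) ^ (k n * k n) := rfl
        _ ≤ (4 : ℝ) ^ n * Real.exp (-(4 * n)) := by
            apply mul_le_mul_of_nonneg_left h5 (by positivity)
        _ ≤ Real.exp 2 ^ n * Real.exp (-(4 * n)) := by
            apply mul_le_mul_of_nonneg_right (pow_le_pow_left₀ (by norm_num) hexp2 n)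
              (Real.exp_pos _).le
        _ = Real.exp (-2) ^ n := by
            rw [← Real.exp_nat_mul, ← Real.exp_nat_mul, ← Real.exp_add]
            congr 1
            ring
  -- final assembly
  have hnR : Tendsto (fun n : ℕ => (n : ℝ)) atTop atTop := tendsto_natCast_atTop_atTop
  have hev : ∀ᶠ n : ℕ in atTop,
      1 - g n ≤ f n ∧ f n ≤ 1 ∧ 0 ≤ g n ∧ g n ≤ (Real.exp (-2)) ^ n := by
    filter_upwards [hnR.eventually_ge_atTop C, hnR.eventually_ge_atTop (2 / ε'),
      hnR.eventually_ge_atTop 2] with n h1 h2 h3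
    exact key n h1 h2 h3
  have hg0 : Tendsto g atTop (nhds 0) := by
    apply tendsto_of_tendsto_of_tendsto_of_le_of_le' tendsto_const_nhds
      (tendsto_pow_atTop_nhds_zero_of_lt_one (Real.exp_pos _).le
        (Real.exp_lt_one_iff.mpr (show (-2:ℝ) < 0 by norm_num)))
    · filter_upwards [hev] with n hn
      exact hn.2.2.1
    · filter_upwards [hev] with n hn
      exact hn.2.2.2
  have hlow : Tendsto (fun n => 1 - g n) atTop (nhds 1) := by
    have h1 : Tendsto (fun _ : ℕ => (1 : ℝ)) atTop (nhds 1) := tendsto_const_nhds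
    simpa using h1.sub hg0
  apply tendsto_of_tendsto_of_tendsto_of_le_of_le' hlow tendsto_const_nhds
  · filter_upwards [hev] with n hn
    exact hn.1
  · filter_upwards [hev] with n hn
    exact hn.2.1
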